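/- Let ψ be a unit vector in a Hilbert space, G a self-adjoint operator with ψ in its domain, ⟨G⟩ = ⟨ψ, Gψ⟩ and (ΔG)² = ⟨ψ, G²ψ⟩ − ⟨G⟩² > 0. Define ψ⊥ = (G − ⟨G⟩)ψ/ΔG and φ± = (ψ ∓ i ψ⊥)/√2. Then ⟨ψ, ψ⊥⟩ = 0, ‖ψ⊥‖ = 1, φ± are orthonormal, and the rank-2 operator L = −2i[G, |ψ⟩⟨ψ|] satisfies L φ± = ±2ΔG φ±. -/

import Mathlib

open scoped InnerProductSpace

/-- Let `ψ` be a unit vector, `G` a symmetric operator, `⟨G⟩ = ⟪ψ, Gψ⟫` and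
`(ΔG)² = ⟪ψ, G²ψ⟫ − ⟨G⟩² > 0`. With `ψ⊥ = (G − ⟨G⟩)ψ/ΔG` and
`φ± = (ψ ∓ i ψ⊥)/√2`, the vectors `ψ, ψ⊥` are orthonormal, `φ±` are
orthonormal, and `L = −2i[G, |ψ⟩⟨ψ|]` satisfies `L φ± = ±2ΔG φ±`. -/
theorem stmt_17 {E : Type*} [NormedAddCommGroup E] [InnerProductSpace ℂ E]
    (G : E →ₗ[ℂ] E) (hG : ∀ x y : E, ⟪G x, y⟫_ℂ = ⟪x, G y⟫_ℂ)
    (ψ : E) (hψ : ‖ψ‖ = 1)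
    (Δ : ℝ) (hΔ : 0 < Δ)
    (hΔsq : ((Δ : ℂ)) ^ 2 = ⟪ψ, G (G ψ)⟫_ℂ - ⟪ψ, G ψ⟫_ℂ ^ 2)
    (ψp : E) (hψp : ψp = ((Δ : ℂ))⁻¹ • (G ψ - ⟪ψ, G ψ⟫_ℂ • ψ))
    (φp φm : E)
    (hφp : φp = ((Real.sqrt 2 : ℂ))⁻¹ • (ψ - Complex.I • ψp))
    (hφm : φm = ((Real.sqrt 2 : ℂ))⁻¹ • (ψ + Complex.I • ψp))
    (P : E →ₗ[ℂ] E) (hP : ∀ x : E, P x = ⟪ψ, x⟫_ℂ • ψ)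
    (L : E →ₗ[ℂ] E)
    (hL : L = (-(2 : ℂ) * Complex.I) • (G ∘ₗ P - P ∘ₗ G)) :
    ⟪ψ, ψp⟫_ℂ = 0 ∧ ‖ψp‖ = 1 ∧
    ⟪φp, φm⟫_ℂ = 0 ∧ ‖φp‖ = 1 ∧ ‖φm‖ = 1 ∧
    L φp = ((2 * Δ : ℝ) : ℂ) • φp ∧ L φm = (-(2 * Δ : ℝ) : ℂ) • φm := by
  have norm1 : ∀ x : E, ⟪x, x⟫_ℂ = 1 → ‖x‖ = 1 := by
    intro x hx
    have h := inner_self_eq_norm_sq_to_K (𝕜 := ℂ) x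
    rw [hx] at h
    have h2 : ((‖x‖ ^ 2 : ℝ) : ℂ) = ((1 : ℝ) : ℂ) := by push_cast; exact h.symm
    have h3 := Complex.ofReal_injective h2
    nlinarith [norm_nonneg x]
  set a : ℂ := ⟪ψ, G ψ⟫_ℂ with ha_def
  have hψψ : ⟪ψ, ψ⟫_ℂ = 1 := by
    rw [inner_self_eq_norm_sq_to_K, hψ]; norm_num
  have ha : (starRingEnd ℂ) a = a := by
    rw [ha_def, inner_conj_symm]
    exact hG ψ ψ
  have hΔne : (Δ : ℂ) ≠ 0 := by exact_mod_cast hΔ.ne'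
  have h1 : ⟪ψ, ψp⟫_ℂ = 0 := by
    rw [hψp]
    simp [inner_smul_right, inner_sub_right, hψψ, hψ, ← ha_def]
  have hGψψ : ⟪G ψ, ψ⟫_ℂ = a := hG ψ ψ
  have hGGψ : ⟪G ψ, G ψ⟫_ℂ = ⟪ψ, G (G ψ)⟫_ℂ := hG ψ (G ψ)
  have hpp : ⟪ψp, ψp⟫_ℂ = 1 := by
    rw [hψp]
    simp only [inner_smul_left, inner_smul_right, inner_sub_left, inner_sub_right,
      hψψ, hGψψ, hGGψ, ha, map_inv₀, Complex.conj_ofReal]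
    rw [← ha_def]
    field_simp
    linear_combination -hΔsq
  have hψpn : ‖ψp‖ = 1 := norm1 _ hpp
  have hpψ : ⟪ψp, ψ⟫_ℂ = 0 := by rw [← inner_conj_symm, h1, map_zero]
  have hs2' : (Real.sqrt 2 : ℂ) * (Real.sqrt 2 : ℂ) = 2 := by
    norm_cast
    rw [Real.mul_self_sqrt (by norm_num : (0:ℝ) ≤ 2)]
  have hs2 : ((Real.sqrt 2 : ℂ))⁻¹ * ((Real.sqrt 2 : ℂ))⁻¹ = 2⁻¹ := by
    rw [← mul_inv, hs2']
  have hconj_s : (starRingEnd ℂ) ((Real.sqrt 2 : ℂ))⁻¹ = ((Real.sqrt 2 : ℂ))⁻¹ := by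
    rw [map_inv₀, Complex.conj_ofReal]
  have horth : ⟪φp, φm⟫_ℂ = 0 := by
    rw [hφp, hφm]
    simp only [inner_smul_left, inner_smul_right, inner_sub_left, inner_add_right,
      hψψ, hpp, h1, hpψ, hconj_s]
    simp only [Complex.conj_I]
    linear_combination (((Real.sqrt 2 : ℂ))⁻¹ * ((Real.sqrt 2 : ℂ))⁻¹) * Complex.I_sq
  have hφpn : ‖φp‖ = 1 := by
    apply norm1
    rw [hφp]
    simp only [inner_smul_left, inner_smul_right, inner_sub_left, inner_sub_right,
      hψψ, hpp, h1, hpψ, hconj_s]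
    simp only [Complex.conj_I]
    linear_combination (-((Real.sqrt 2 : ℂ))⁻¹ * ((Real.sqrt 2 : ℂ))⁻¹) * Complex.I_sq + (2:ℂ) * hs2
  have hφmn : ‖φm‖ = 1 := by
    apply norm1
    rw [hφm]
    simp only [inner_smul_left, inner_smul_right, inner_add_left, inner_add_right,
      hψψ, hpp, h1, hpψ, hconj_s]
    simp only [Complex.conj_I]
    linear_combination (-((Real.sqrt 2 : ℂ))⁻¹ * ((Real.sqrt 2 : ℂ))⁻¹) * Complex.I_sq + (2:ℂ) * hs2
  -- action of L
  have hvec : G ψ - a • ψ = (Δ : ℂ) • ψp := by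
    rw [hψp, smul_inv_smul₀ hΔne]
  have hLψ : L ψ = (-(2:ℂ) * Complex.I * Δ) • ψp := by
    rw [hL]
    simp only [LinearMap.smul_apply, LinearMap.sub_apply, LinearMap.comp_apply, hP, hψψ,
      one_smul, ← ha_def]
    rw [hvec, smul_smul]
  have hGψp : ⟪ψ, G ψp⟫_ℂ = (Δ : ℂ) := by
    rw [hψp, map_smul, map_sub, map_smul, inner_smul_right, inner_sub_right,
      inner_smul_right, ← ha_def]
    field_simp
    linear_combination -hΔsq
  have hLψp : L ψp = ((2:ℂ) * Complex.I * Δ) • ψ := by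
    rw [hL]
    simp only [LinearMap.smul_apply, LinearMap.sub_apply, LinearMap.comp_apply, hP, h1,
      hGψp, zero_smul, map_zero, zero_sub, smul_neg, smul_smul]
    rw [← neg_smul]
    congr 1
    ring
  have hLφp : L φp = ((2 * Δ : ℝ) : ℂ) • φp := by
    rw [hφp, map_smul, map_sub, map_smul, hLψ, hLψp]
    push_cast
    match_scalars
    · ring
    · linear_combination (-(2:ℂ) * (Δ:ℂ) * ((Real.sqrt 2 : ℂ))⁻¹) * Complex.I_sq
  have hLφm : L φm = (-(2 * Δ : ℝ) : ℂ) • φm := by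
    rw [hφm, map_smul, map_add, map_smul, hLψ, hLψp]
    push_cast
    match_scalars
    · ring
    · linear_combination ((2:ℂ) * (Δ:ℂ) * ((Real.sqrt 2 : ℂ))⁻¹) * Complex.I_sq
  exact ⟨h1, hψpn, horth, hφpn, hφmn, hLφp, hLφm⟩
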